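/- Let V = {v_1, ..., v_K} be an orthogonal family of nonzero vectors in C^{N+1} and define the 3-tensor S^{ij}_k = ∑_{m=1}^K (1/‖v_m‖²) v_m^i v_m^j conj(v_m^k). Then S is doubly-symmetric: S^{ij}_k is symmetric in (i,j), ∑_m S^{im}_j S^{kl}_m is symmetric in (i,k), and ∑_m S^{im}_j conj(S^{lm}_k) is symmetric in (i,k). -/

import Mathlib

open scoped BigOperators InnerProductSpace ComplexConjugate

/-- **Orthogonal families give doubly-symmetric 3-tensors.**
If `v 1, …, v K` is an orthogonal family of nonzero vectors in `ℂ^{N+1}` and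
`S^{ij}_k = ∑_m (1/‖v m‖²) v_m^i v_m^j conj(v_m^k)`, then `S` satisfies the three
double-symmetry conditions. -/
theorem orthogonal_family_tensor_doubly_symmetric (N K : ℕ)
    (v : Fin K → EuclideanSpace ℂ (Fin (N + 1)))
    (horth : ∀ m n, m ≠ n → ⟪v m, v n⟫_ℂ = 0)
    (hne : ∀ m, v m ≠ 0)
    (S : Fin (N + 1) → Fin (N + 1) → Fin (N + 1) → ℂ)
    (hS : ∀ i j k, S i j k
      = ∑ m, (1 / (‖v m‖ ^ 2 : ℂ)) * (v m i * v m j * (starRingEnd ℂ) (v m k))) :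
    (∀ i j k, S i j k = S j i k) ∧
    (∀ i j k l, ∑ m, S i m j * S k l m = ∑ m, S k m j * S i l m) ∧
    (∀ i j k l, ∑ m, S i m j * (starRingEnd ℂ) (S l m k)
        = ∑ m, S k m j * (starRingEnd ℂ) (S l m i)) := by
  set c : Fin K → ℂ := fun a => 1 / (‖v a‖ ^ 2 : ℂ) with hc
  have hnz : ∀ a, (‖v a‖ ^ 2 : ℂ) ≠ 0 := by
    intro a
    have : ‖v a‖ ≠ 0 := norm_ne_zero_iff.mpr (hne a)
    exact_mod_cast pow_ne_zero 2 (Complex.ofReal_ne_zero.mpr this)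
  have hca : ∀ a, c a * (‖v a‖ ^ 2 : ℂ) = 1 := fun a => one_div_mul_cancel (hnz a)
  have key : ∀ a b, ∑ m, v a m * (starRingEnd ℂ) (v b m)
      = if b = a then (‖v a‖ ^ 2 : ℂ) else 0 := by
    intro a b
    have h : ∑ m, v a m * (starRingEnd ℂ) (v b m) = ⟪v b, v a⟫_ℂ := by
      rw [PiLp.inner_apply]
      exact Finset.sum_congr rfl fun m _ => by simp only [RCLike.inner_apply]
    rw [h]
    split_ifs with hab
    · subst hab; rw [inner_self_eq_norm_sq_to_K]; norm_cast
    · exact horth b a hab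
  have collapse : ∀ (f g : Fin K → ℂ), (∑ a, ∑ b, ((f a * c a) * (g b * c b)
      * ∑ m, v a m * (starRingEnd ℂ) (v b m))) = ∑ a, f a * g a * c a := by
    intro f g
    refine Finset.sum_congr rfl fun a _ => ?_
    have h1 : ∀ b, (f a * c a) * (g b * c b) * ∑ m, v a m * (starRingEnd ℂ) (v b m)
        = if b = a then (f a * c a) * (g b * c b) * (‖v a‖ ^ 2 : ℂ) else 0 := by
      intro b
      rw [key]
      split_ifs with h
      · rfl
      · rw [mul_zero]
    simp only [h1, Finset.sum_ite_eq' Finset.univ a, Finset.mem_univ, if_true]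
    calc (f a * c a) * (g a * c a) * (‖v a‖ ^ 2 : ℂ)
        = f a * g a * c a * (c a * (‖v a‖ ^ 2 : ℂ)) := by ring
      _ = f a * g a * c a := by rw [hca, mul_one]
  have hconjc : ∀ b, (starRingEnd ℂ) (c b) = c b := by
    intro b
    simp [hc, map_div₀, Complex.conj_ofReal]
  refine ⟨?_, ?_, ?_⟩
  · intro i j k
    rw [hS, hS]
    exact Finset.sum_congr rfl fun m _ => by ring
  · intro i j k l
    have main : ∀ i k, ∑ m, S i m j * S k l m
        = ∑ a, (v a i * (starRingEnd ℂ) (v a j)) * (v a k * v a l) * c a := by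
      intro i k
      calc ∑ m, S i m j * S k l m
          = ∑ m, ∑ a, ∑ b, (c a * (v a i * v a m * (starRingEnd ℂ) (v a j)))
            * (c b * (v b k * v b l * (starRingEnd ℂ) (v b m))) := by
            simp only [hS]
            exact Finset.sum_congr rfl fun m _ => Finset.sum_mul_sum _ _ _ _
        _ = ∑ a, ∑ b, ∑ m, (c a * (v a i * v a m * (starRingEnd ℂ) (v a j)))
            * (c b * (v b k * v b l * (starRingEnd ℂ) (v b m))) := by
            rw [Finset.sum_comm]
            exact Finset.sum_congr rfl fun a _ => Finset.sum_comm
        _ = ∑ a, ∑ b, (((v a i * (starRingEnd ℂ) (v a j)) * c a)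
            * ((v b k * v b l) * c b) * ∑ m, v a m * (starRingEnd ℂ) (v b m)) := by
            refine Finset.sum_congr rfl fun a _ => Finset.sum_congr rfl fun b _ => ?_
            rw [Finset.mul_sum]
            exact Finset.sum_congr rfl fun m _ => by ring
        _ = ∑ a, (v a i * (starRingEnd ℂ) (v a j)) * (v a k * v a l) * c a :=
            collapse _ _
    rw [main i k, main k i]
    exact Finset.sum_congr rfl fun a _ => by ring
  · intro i j k l
    have hSconj : ∀ l m k, (starRingEnd ℂ) (S l m k)
        = ∑ b, c b * ((starRingEnd ℂ) (v b l) * (starRingEnd ℂ) (v b m) * v b k) := by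
      intro l m k
      rw [hS, map_sum]
      refine Finset.sum_congr rfl fun b _ => ?_
      simp only [map_mul, hconjc, Complex.conj_conj]
      exact congrArg (· * _) (hconjc b)
    have main : ∀ i k, ∑ m, S i m j * (starRingEnd ℂ) (S l m k)
        = ∑ a, (v a i * (starRingEnd ℂ) (v a j))
          * ((starRingEnd ℂ) (v a l) * v a k) * c a := by
      intro i k
      calc ∑ m, S i m j * (starRingEnd ℂ) (S l m k)
          = ∑ m, ∑ a, ∑ b, (c a * (v a i * v a m * (starRingEnd ℂ) (v a j)))
            * (c b * ((starRingEnd ℂ) (v b l) * (starRingEnd ℂ) (v b m) * v b k)) := by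
            refine Finset.sum_congr rfl fun m _ => ?_
            rw [hS, hSconj]
            exact Finset.sum_mul_sum _ _ _ _
        _ = ∑ a, ∑ b, ∑ m, (c a * (v a i * v a m * (starRingEnd ℂ) (v a j)))
            * (c b * ((starRingEnd ℂ) (v b l) * (starRingEnd ℂ) (v b m) * v b k)) := by
            rw [Finset.sum_comm]
            exact Finset.sum_congr rfl fun a _ => Finset.sum_comm
        _ = ∑ a, ∑ b, (((v a i * (starRingEnd ℂ) (v a j)) * c a)
            * (((starRingEnd ℂ) (v b l) * v b k) * c b)
            * ∑ m, v a m * (starRingEnd ℂ) (v b m)) := by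
            refine Finset.sum_congr rfl fun a _ => Finset.sum_congr rfl fun b _ => ?_
            rw [Finset.mul_sum]
            exact Finset.sum_congr rfl fun m _ => by ring
        _ = _ := collapse _ _
    rw [main i k, main k i]
    exact Finset.sum_congr rfl fun a _ => by ring
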